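/- Let M be a model category, n a natural number, and S a subset of {1,…,n}, and equip the functor category 2ⁿ ⥤ M with the model structure M^{2ⁿ}_S whose fibrations are the objectwise fibrations, whose weak equivalences are the maps τ with τ(x) a weak equivalence for every x with x_i = false for all i ∈ S, and whose cofibrations are the maps whose relative latching map at every x is a cofibration, and a trivial cofibration whenever x_i = true for some i ∈ S. Then a natural transformation τ : F → G is simultaneously a cofibration and a weak equivalence in M^{2ⁿ}_S if and only if for every x ∈ 2ⁿ the relative latching map of τ at x is a trivial cofibration in M. In particular, the class of trivial cofibrations of M^{2ⁿ}_S does not depend on S and coincides with that of the Reedy model structure M^{2ⁿ}_∅. -/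

import Mathlib

open CategoryTheory CategoryTheory.Limits

universe v u

/-- `f` is a retract of `g` in the arrow category. -/
def IsRetract {C : Type u} [Category.{v} C] {X Y X' Y' : C} (f : X ⟶ Y) (g : X' ⟶ Y') : Prop :=
  ∃ (i : X ⟶ X') (r : X' ⟶ X) (i' : Y ⟶ Y') (r' : Y' ⟶ Y),
    i ≫ r = 𝟙 X ∧ i' ≫ r' = 𝟙 Y ∧ i ≫ g = f ≫ i' ∧ g ≫ r' = r ≫ f

/-- A model structure on a category: three classes of morphisms (weak equivalences,
cofibrations, fibrations) satisfying Quillen's axioms (two-out-of-three, closure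
under retracts, lifting, and factorization). -/
structure ModelStructure (C : Type u) [Category.{v} C] where
  W : MorphismProperty C
  Cof : MorphismProperty C
  Fib : MorphismProperty C
  w_comp : ∀ {X Y Z : C} (f : X ⟶ Y) (g : Y ⟶ Z), W f → W g → W (f ≫ g)
  w_cancel_left : ∀ {X Y Z : C} (f : X ⟶ Y) (g : Y ⟶ Z), W f → W (f ≫ g) → W g
  w_cancel_right : ∀ {X Y Z : C} (f : X ⟶ Y) (g : Y ⟶ Z), W g → W (f ≫ g) → W f
  w_retract : ∀ {X Y X' Y' : C} (f : X ⟶ Y) (g : X' ⟶ Y'), IsRetract f g → W g → W f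
  cof_retract : ∀ {X Y X' Y' : C} (f : X ⟶ Y) (g : X' ⟶ Y'), IsRetract f g → Cof g → Cof f
  fib_retract : ∀ {X Y X' Y' : C} (f : X ⟶ Y) (g : X' ⟶ Y'), IsRetract f g → Fib g → Fib f
  lift_cof_trivFib : ∀ {A B X Y : C} (i : A ⟶ B) (p : X ⟶ Y),
    Cof i → Fib p → W p → HasLiftingProperty i p
  lift_trivCof_fib : ∀ {A B X Y : C} (i : A ⟶ B) (p : X ⟶ Y),
    Cof i → W i → Fib p → HasLiftingProperty i p
  factor_cof_trivFib : ∀ {X Y : C} (f : X ⟶ Y), ∃ (Z : C) (g : X ⟶ Z) (h : Z ⟶ Y),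
    Cof g ∧ Fib h ∧ W h ∧ g ≫ h = f
  factor_trivCof_fib : ∀ {X Y : C} (f : X ⟶ Y), ∃ (Z : C) (g : X ⟶ Z) (h : Z ⟶ Y),
    Cof g ∧ W g ∧ Fib h ∧ g ≫ h = f

variable {M : Type u} [Category.{v} M]

/-- An object is cofibrant if the map from the initial object is a cofibration. -/
def ModelStructure.Cofibrant [HasInitial M] (m : ModelStructure M) (X : M) : Prop :=
  m.Cof (initial.to X)

section Latching

variable {P : Type} [Preorder P] [HasColimitsOfSize.{0, 0} M]

/-- The latching object of `F : P ⥤ M` at `x`: the colimit of `F` over the full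
subcategory of all `y < x`. -/
noncomputable def latchingObj (F : P ⥤ M) (x : P) : M :=
  colimit (ObjectProperty.ι (fun y : P => y < x) ⋙ F)

/-- The canonical (latching) map `L_x F ⟶ F x`. -/
noncomputable def latchingMap (F : P ⥤ M) (x : P) : latchingObj F x ⟶ F.obj x :=
  colimit.desc (ObjectProperty.ι (fun y : P => y < x) ⋙ F)
    { pt := F.obj x
      ι :=
        { app := fun y => F.map (homOfLE y.property.le)
          naturality := by
            intro a b f
            dsimp
            rw [Category.comp_id, ← F.map_comp]
            rfl } }

/-- The map induced by a natural transformation on latching objects. -/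
noncomputable def latchingObjHom {F G : P ⥤ M} (τ : F ⟶ G) (x : P) :
    latchingObj F x ⟶ latchingObj G x :=
  colimMap (Functor.whiskerLeft (ObjectProperty.ι (fun y : P => y < x)) τ)

lemma latching_square {F G : P ⥤ M} (τ : F ⟶ G) (x : P) :
    latchingMap F x ≫ τ.app x = latchingObjHom τ x ≫ latchingMap G x := by
  apply colimit.hom_ext
  intro y
  dsimp only [latchingMap, latchingObjHom, latchingObj]
  erw [colimit.ι_desc_assoc, ι_colimMap_assoc, colimit.ι_desc]
  simp

/-- The relative latching map of `τ : F ⟶ G` at `x`: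
the induced map `(L_x G) ⊔_{L_x F} F x ⟶ G x`. -/
noncomputable def relLatchingMap {F G : P ⥤ M} (τ : F ⟶ G) (x : P) :
    pushout (latchingMap F x) (latchingObjHom τ x) ⟶ G.obj x :=
  pushout.desc (τ.app x) (latchingMap G x) (latching_square τ x)

end Latching

section Auxiliary

/-- A map having the left lifting property against all fibrations is a trivial
cofibration (retract argument). -/
lemma llp_trivCof {C : Type u} [Category.{v} C] (m : ModelStructure C) {X Y : C} (j : X ⟶ Y)
    (h : ∀ {A B : C} (p : A ⟶ B), m.Fib p → HasLiftingProperty j p) :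
    m.Cof j ∧ m.W j := by
  obtain ⟨Z, g, q, hg, hgW, hq, hfac⟩ := m.factor_trivCof_fib j
  haveI := h q hq
  have sq : CommSq g j q (𝟙 Y) := ⟨by rw [hfac, Category.comp_id]⟩
  have hr : IsRetract j g :=
    ⟨𝟙 X, 𝟙 X, sq.lift, q, by simp, sq.fac_right, by simp [sq.fac_left], by
      rw [hfac, Category.id_comp]⟩
  exact ⟨m.cof_retract j g hr hg, m.w_retract j g hr hgW⟩

/-- Left lifting properties are stable under pushout. -/
lemma llp_pushout_inl {C : Type u} [Category.{v} C] {X Y Z A B : C} (f : X ⟶ Y) (g : X ⟶ Z)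
    [HasPushout f g] (p : A ⟶ B) [HasLiftingProperty g p] :
    HasLiftingProperty (pushout.inl f g) p := by
  constructor
  intro a b sq
  have sq2 : CommSq (f ≫ a) g p (pushout.inr f g ≫ b) :=
    ⟨by rw [Category.assoc, sq.w, ← Category.assoc, pushout.condition, Category.assoc]⟩
  refine ⟨⟨⟨pushout.desc a sq2.lift (by rw [sq2.fac_left]), pushout.inl_desc _ _ _, ?_⟩⟩⟩
  apply pushout.hom_ext
  · rw [← Category.assoc, pushout.inl_desc]; exact sq.w
  · rw [← Category.assoc, pushout.inr_desc]; exact sq2.fac_right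

section LatchingLLP

variable {M : Type u} [Category.{v} M] [HasColimitsOfSize.{0, 0} M]
variable {P : Type} [Preorder P]

lemma ι_latchingMap (F : P ⥤ M) (x : P) (y : ObjectProperty.FullSubcategory (fun y : P => y < x)) :
    colimit.ι (ObjectProperty.ι (fun y : P => y < x) ⋙ F) y ≫ latchingMap F x =
      F.map (homOfLE y.property.le) :=
  colimit.ι_desc _ _

lemma ι_latchingObjHom {F G : P ⥤ M} (τ : F ⟶ G) (x : P)
    (y : ObjectProperty.FullSubcategory (fun y : P => y < x)) :
    colimit.ι (ObjectProperty.ι (fun y : P => y < x) ⋙ F) y ≫ latchingObjHom τ x =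
      τ.app y.obj ≫ colimit.ι (ObjectProperty.ι (fun y : P => y < x) ⋙ G) y :=
  ι_colimMap _ _

lemma inl_relLatchingMap {F G : P ⥤ M} (τ : F ⟶ G) (x : P) :
    pushout.inl _ _ ≫ relLatchingMap τ x = τ.app x :=
  pushout.inl_desc _ _ _

lemma inr_relLatchingMap {F G : P ⥤ M} (τ : F ⟶ G) (x : P) :
    pushout.inr _ _ ≫ relLatchingMap τ x = latchingMap G x :=
  pushout.inr_desc _ _ _

/-- The key Reedy-style lifting construction: if all relative latching maps of `τ`
strictly below `x` lift against `p`, then so does the induced map on latching objects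
at `x`. -/
lemma latchingObjHom_llp {gr : P → ℕ}
    (hgr : ∀ {a b : P}, a < b → gr a < gr b)
    (hle : ∀ {a b : P}, a ≤ b → a = b ∨ a < b)
    {F G : P ⥤ M} (τ : F ⟶ G) (x : P) {A B : M} (p : A ⟶ B)
    (hrel : ∀ y, y < x → HasLiftingProperty (relLatchingMap τ y) p) :
    HasLiftingProperty (latchingObjHom τ x) p := by
  constructor
  intro f g sq
  have key : ∀ k : ℕ, ∃ ℓ : ∀ y : P, y < x → gr y < k → (G.obj y ⟶ A),
      (∀ (z y : P) (hz : z < x) (hy : y < x) (hkz : gr z < k) (hky : gr y < k)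
        (hzy : z ≤ y), G.map (homOfLE hzy) ≫ ℓ y hy hky = ℓ z hz hkz) ∧
      (∀ (y : P) (hy : y < x) (hky : gr y < k),
        τ.app y ≫ ℓ y hy hky =
          colimit.ι (ObjectProperty.ι (fun y : P => y < x) ⋙ F) ⟨y, hy⟩ ≫ f) ∧
      (∀ (y : P) (hy : y < x) (hky : gr y < k),
        ℓ y hy hky ≫ p =
          colimit.ι (ObjectProperty.ι (fun y : P => y < x) ⋙ G) ⟨y, hy⟩ ≫ g) := by
    intro k
    induction k with
    | zero =>
      exact ⟨fun _ _ hk => absurd hk (Nat.not_lt_zero _),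
        fun _ _ _ _ _ hk => absurd hk (Nat.not_lt_zero _),
        fun _ _ hk => absurd hk (Nat.not_lt_zero _),
        fun _ _ hk => absurd hk (Nat.not_lt_zero _)⟩
    | succ k ih =>
      obtain ⟨ℓ, hnat, htop, hbot⟩ := ih
      have key2 : ∀ (y : P) (hy : y < x), gr y < k + 1 → ¬ gr y < k →
          ∃ L : G.obj y ⟶ A,
            (∀ (z : P) (hz : z < y) (hkz : gr z < k),
              G.map (homOfLE hz.le) ≫ L = ℓ z (hz.trans hy) hkz) ∧
            (τ.app y ≫ L =
              colimit.ι (ObjectProperty.ι (fun y : P => y < x) ⋙ F) ⟨y, hy⟩ ≫ f) ∧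
            (L ≫ p =
              colimit.ι (ObjectProperty.ι (fun y : P => y < x) ⋙ G) ⟨y, hy⟩ ≫ g) := by
        intro y hy hky1 hky2
        have hz_grade : ∀ {z : P}, z < y → gr z < k := fun hz => by
          have := hgr hz; omega
        -- the cocone on the latching diagram of `G` at `y` given by the previous stage
        let coc : Cocone (ObjectProperty.ι (fun z : P => z < y) ⋙ G) :=
          { pt := A
            ι :=
              { app := fun z => ℓ z.obj (z.property.trans hy) (hz_grade z.property)
                naturality := by
                  intro z z' η
                  dsimp
                  rw [Category.comp_id]
                  exact hnat z.obj z'.obj _ _ _ _ (leOfHom η.hom) } }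
        have hdesc : latchingMap F y ≫
            (colimit.ι (ObjectProperty.ι (fun y : P => y < x) ⋙ F) ⟨y, hy⟩ ≫ f) =
            latchingObjHom τ y ≫ colimit.desc _ coc := by
          apply colimit.hom_ext
          intro z
          have hw : F.map (homOfLE z.property.le) ≫
              colimit.ι (ObjectProperty.ι (fun y : P => y < x) ⋙ F) ⟨y, hy⟩ =
              colimit.ι (ObjectProperty.ι (fun y : P => y < x) ⋙ F)
                ⟨z.obj, z.property.trans hy⟩ :=
            colimit.w (ObjectProperty.ι (fun y : P => y < x) ⋙ F)
              (ObjectProperty.homMk (homOfLE z.property.le) : (⟨z.obj, z.property.trans hy⟩ :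
                ObjectProperty.FullSubcategory (fun y : P => y < x)) ⟶ ⟨y, hy⟩)
          conv_lhs => erw [← Category.assoc, ι_latchingMap, ← Category.assoc, hw]
          conv_rhs => erw [← Category.assoc, ι_latchingObjHom, Category.assoc, colimit.ι_desc]
          exact (htop z.obj (z.property.trans hy) (hz_grade z.property)).symm
        let q : pushout (latchingMap F y) (latchingObjHom τ y) ⟶ A :=
          pushout.desc
            (colimit.ι (ObjectProperty.ι (fun y : P => y < x) ⋙ F) ⟨y, hy⟩ ≫ f)
            (colimit.desc _ coc) hdesc
        have hsq : CommSq q (relLatchingMap τ y) p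
            (colimit.ι (ObjectProperty.ι (fun y : P => y < x) ⋙ G) ⟨y, hy⟩ ≫ g) := by
          constructor
          apply pushout.hom_ext
          · rw [← Category.assoc, ← Category.assoc, inl_relLatchingMap]
            show (pushout.inl _ _ ≫ q) ≫ p = _
            erw [pushout.inl_desc, Category.assoc, sq.w, ← Category.assoc,
              ι_latchingObjHom, Category.assoc]
            rfl
          · rw [← Category.assoc, ← Category.assoc, inr_relLatchingMap]
            show (pushout.inr _ _ ≫ q) ≫ p = _
            erw [pushout.inr_desc]
            apply colimit.hom_ext
            intro z
            erw [← Category.assoc, colimit.ι_desc]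
            show (coc.ι.app z) ≫ p = _
            rw [hbot z.obj (z.property.trans hy) (hz_grade z.property)]
            have hw : G.map (homOfLE z.property.le) ≫
                colimit.ι (ObjectProperty.ι (fun y : P => y < x) ⋙ G) ⟨y, hy⟩ =
                colimit.ι (ObjectProperty.ι (fun y : P => y < x) ⋙ G)
                  ⟨z.obj, z.property.trans hy⟩ :=
              colimit.w (ObjectProperty.ι (fun y : P => y < x) ⋙ G)
                (ObjectProperty.homMk (homOfLE z.property.le) : (⟨z.obj, z.property.trans hy⟩ :
                  ObjectProperty.FullSubcategory (fun y : P => y < x)) ⟶ ⟨y, hy⟩)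
            conv_rhs => erw [← Category.assoc, ι_latchingMap, ← Category.assoc, hw]
        haveI := hrel y hy
        refine ⟨hsq.lift, ?_, ?_, hsq.fac_right⟩
        · intro z hz hkz
          have h1 : G.map (homOfLE hz.le) =
              colimit.ι (ObjectProperty.ι (fun z : P => z < y) ⋙ G) ⟨z, hz⟩ ≫
                latchingMap G y := (ι_latchingMap G y ⟨z, hz⟩).symm
          erw [h1, Category.assoc, ← inr_relLatchingMap τ y, Category.assoc, hsq.fac_left]
          show _ ≫ pushout.inr _ _ ≫ q = _
          erw [pushout.inr_desc, colimit.ι_desc]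
        · rw [← inl_relLatchingMap τ y, Category.assoc, hsq.fac_left]
          show pushout.inl _ _ ≫ q = _
          erw [pushout.inl_desc]
      choose L hL1 hL2 hL3 using key2
      refine ⟨fun y hy hky => if h : gr y < k then ℓ y hy h else L y hy hky h, ?_, ?_, ?_⟩
      · intro z y hz hy hkz hky hzy
        rcases hle hzy with rfl | hlt'
        · rw [show (homOfLE hzy : z ⟶ z) = 𝟙 z from rfl, G.map_id, Category.id_comp]
        · by_cases h1 : gr y < k
          · have h2 : gr z < k := (hgr hlt').trans h1
            simp only [dif_pos h1, dif_pos h2]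
            exact hnat z y hz hy h2 h1 hzy
          · have h2 : gr z < k := by have := hgr hlt'; omega
            simp only [dif_pos h2, dif_neg h1]
            exact hL1 y hy hky h1 z hlt' h2
      · intro y hy hky
        by_cases h1 : gr y < k
        · simp only [dif_pos h1]; exact htop y hy h1
        · simp only [dif_neg h1]; exact hL2 y hy hky h1
      · intro y hy hky
        by_cases h1 : gr y < k
        · simp only [dif_pos h1]; exact hbot y hy h1
        · simp only [dif_neg h1]; exact hL3 y hy hky h1
  obtain ⟨ℓ, hnat, htop, hbot⟩ := key (gr x)
  let coc : Cocone (ObjectProperty.ι (fun y : P => y < x) ⋙ G) :=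
    { pt := A
      ι :=
        { app := fun y => ℓ y.obj y.property (hgr y.property)
          naturality := by
            intro z z' η
            dsimp
            rw [Category.comp_id]
            exact hnat z.obj z'.obj _ _ _ _ (leOfHom η.hom) } }
  refine ⟨⟨⟨colimit.desc _ coc, ?_, ?_⟩⟩⟩
  · apply colimit.hom_ext
    intro y
    erw [← Category.assoc, ι_latchingObjHom, Category.assoc, colimit.ι_desc]
    exact htop y.obj y.property (hgr y.property)
  · apply colimit.hom_ext
    intro y
    erw [← Category.assoc, colimit.ι_desc]
    exact hbot y.obj y.property (hgr y.property)

end LatchingLLP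

/-- The grade of a vertex of the cube: the number of `true` coordinates. -/
def cubeGrade {n : ℕ} (x : Fin n → Bool) : ℕ :=
  (Finset.univ.filter fun i => x i = true).card

lemma cubeGrade_lt {n : ℕ} {y x : Fin n → Bool} (h : y < x) : cubeGrade y < cubeGrade x := by
  rw [lt_iff_le_not_ge] at h
  obtain ⟨h1, h2⟩ := h
  apply Finset.card_lt_card
  rw [Finset.ssubset_def]
  constructor
  · intro j hj
    simp only [Finset.mem_filter, Finset.mem_univ, true_and] at hj ⊢
    exact Bool.le_iff_imp.mp (Pi.le_def.mp h1 j) hj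
  · intro hsub
    refine h2 (Pi.le_def.mpr fun i => Bool.le_iff_imp.mpr fun hxi => ?_)
    have := hsub (Finset.mem_filter.mpr ⟨Finset.mem_univ i, hxi⟩)
    exact (Finset.mem_filter.mp this).2

lemma cube_le_cases {n : ℕ} {a b : Fin n → Bool} (h : a ≤ b) : a = b ∨ a < b := by
  by_cases he : a = b
  · exact Or.inl he
  · refine Or.inr (lt_iff_le_not_ge.mpr ⟨h, fun hba => he ?_⟩)
    funext i
    exact le_antisymm (Pi.le_def.mp h i) (Pi.le_def.mp hba i)

end Auxiliary


attribute [local instance 2000] Preorder.smallCategory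

set_option synthInstance.maxHeartbeats 1000000
set_option maxHeartbeats 2000000

/-- In the model structure `M^{2ⁿ}_S` on `2ⁿ ⥤ M` (objectwise
fibrations; weak equivalences tested at all `x` with `x i = false` for `i ∈ S`;
cofibrations the maps whose relative latching maps are cofibrations, trivial whenever
`x i = true` for some `i ∈ S`), a map `τ` is a trivial cofibration if and only if all
its relative latching maps are trivial cofibrations in `M`.  In particular the class
of trivial cofibrations does not depend on `S` and agrees with that of the Reedy model
structure `M^{2ⁿ}_∅`. -/
theorem statement4 [HasLimits M] [HasColimits M] (m : ModelStructure M)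
    (n : ℕ) (S : Set (Fin n)) (σ : ModelStructure ((Fin n → Bool) ⥤ M))
    (hFib : ∀ {F G : (Fin n → Bool) ⥤ M} (τ : F ⟶ G),
      σ.Fib τ ↔ ∀ x : Fin n → Bool, m.Fib (τ.app x))
    (hW : ∀ {F G : (Fin n → Bool) ⥤ M} (τ : F ⟶ G),
      σ.W τ ↔ ∀ x : Fin n → Bool, (∀ i ∈ S, x i = false) → m.W (τ.app x))
    (hCof : ∀ {F G : (Fin n → Bool) ⥤ M} (τ : F ⟶ G),
      σ.Cof τ ↔ ∀ x : Fin n → Bool, m.Cof (relLatchingMap τ x) ∧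
        ((∃ i ∈ S, x i = true) →
          m.Cof (relLatchingMap τ x) ∧ m.W (relLatchingMap τ x))) :
    ∀ {F G : (Fin n → Bool) ⥤ M} (τ : F ⟶ G),
      (σ.Cof τ ∧ σ.W τ) ↔
        ∀ x : Fin n → Bool, m.Cof (relLatchingMap τ x) ∧ m.W (relLatchingMap τ x) := by
  intro F G τ
  have trivCofRel : ∀ {F G : (Fin n → Bool) ⥤ M} (τ : F ⟶ G) (x : Fin n → Bool),
      (∀ y, y < x → m.Cof (relLatchingMap τ y) ∧ m.W (relLatchingMap τ y)) →
      (m.Cof (latchingObjHom τ x) ∧ m.W (latchingObjHom τ x)) := by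
    intro F G τ x hbelow
    apply llp_trivCof m
    intro A B p hp
    exact latchingObjHom_llp cubeGrade_lt cube_le_cases τ x p
      (fun y hy => m.lift_trivCof_fib _ p (hbelow y hy).1 (hbelow y hy).2 hp)
  have inlTrivCof : ∀ {F G : (Fin n → Bool) ⥤ M} (τ : F ⟶ G) (x : Fin n → Bool),
      (∀ y, y < x → m.Cof (relLatchingMap τ y) ∧ m.W (relLatchingMap τ y)) →
      (m.Cof (pushout.inl (latchingMap F x) (latchingObjHom τ x)) ∧
        m.W (pushout.inl (latchingMap F x) (latchingObjHom τ x))) := by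
    intro F G τ x hbelow
    have hlat := trivCofRel τ x hbelow
    apply llp_trivCof m
    intro A B p hp
    haveI := m.lift_trivCof_fib _ p hlat.1 hlat.2 hp
    exact llp_pushout_inl _ _ p
  constructor
  · rintro ⟨hc, hw⟩
    have hcof := (hCof τ).1 hc
    have main : ∀ k (x : Fin n → Bool), cubeGrade x < k →
        m.Cof (relLatchingMap τ x) ∧ m.W (relLatchingMap τ x) := by
      intro k
      induction k with
      | zero => intro x hx; omega
      | succ k ih =>
        intro x hx
        refine ⟨(hcof x).1, ?_⟩
        by_cases hxs : ∃ i ∈ S, x i = true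
        · exact ((hcof x).2 hxs).2
        · push_neg at hxs
          have hbelow : ∀ y, y < x →
              m.Cof (relLatchingMap τ y) ∧ m.W (relLatchingMap τ y) := fun y hy =>
            ih y (by have := cubeGrade_lt hy; omega)
          have hinl := inlTrivCof τ x hbelow
          have happ : m.W (τ.app x) := (hW τ).1 hw x fun i hi => by
            simpa using hxs i hi
          refine m.w_cancel_left (pushout.inl (latchingMap F x) (latchingObjHom τ x))
            (relLatchingMap τ x) hinl.2 ?_
          rw [inl_relLatchingMap]
          exact happ
    exact fun x => main (cubeGrade x + 1) x (by omega)
  · intro H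
    refine ⟨(hCof τ).2 fun x => ⟨(H x).1, fun _ => H x⟩, (hW τ).2 fun x _ => ?_⟩
    have hinl := inlTrivCof τ x (fun y _ => H y)
    have := m.w_comp (pushout.inl (latchingMap F x) (latchingObjHom τ x))
      (relLatchingMap τ x) hinl.2 (H x).2
    rwa [inl_relLatchingMap] at this
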